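/- For any periodic pattern P of length m over {0,…,σ−1}, the set Occ(P,T) is the disjoint union of Occᵃ(P,T) = {j ∈ R_{s,H} ∩ Occ(P,T) : L-exp(j) > L-exp(P)} and Occˢ(P,T) = {j ∈ R_{s,H} ∩ Occ(P,T) : L-exp(j) = L-exp(P)}, where s = L-head(P) and H = L-root(P). Equivalently, every j ∈ Occ(P,T) satisfies j ∈ R_{s,H} and L-exp(j) ≥ L-exp(P). -/

import Mathlib

open scoped Classical

namespace CSA

/-- Character of a 1-indexed string at position `i` (junk value 0 out of range). -/
def idx (S : List ℕ) (i : ℕ) : ℕ := S.getD (i - 1) 0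

/-- Substring `S[i..j)` in the 1-indexed, half-open convention. -/
def sub (S : List ℕ) (i j : ℕ) : List ℕ := (S.drop (i - 1)).take (j - i)

/-- Suffix `S[i..|S|]` (1-indexed). -/
def suf (S : List ℕ) (i : ℕ) : List ℕ := S.drop (i - 1)

/-- Length of the longest common prefix of two strings. -/
def lcp (A B : List ℕ) : ℕ := ((A.zip B).takeWhile fun p => p.1 == p.2).length

/-- `LCE T j₁ j₂` is the length of the longest common prefix of `T[j₁..n]` and `T[j₂..n]`. -/
def LCE (T : List ℕ) (j₁ j₂ : ℕ) : ℕ := lcp (suf T j₁) (suf T j₂)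

/-- `p` is a period of `S`. -/
def IsPeriod (S : List ℕ) (p : ℕ) : Prop :=
  1 ≤ p ∧ p ≤ S.length ∧ ∀ i, i + p < S.length → S.getD i 0 = S.getD (i + p) 0

/-- The shortest period of `S`. -/
noncomputable def per (S : List ℕ) : ℕ := sInf {p | IsPeriod S p}

/-- `R = {i ∈ [1..n−3τ+2] : per(T[i..i+3τ−1)) ≤ τ/3}`. -/
noncomputable def R (T : List ℕ) (τ : ℕ) : Set ℕ :=
  {i | 1 ≤ i ∧ i + 3 * τ ≤ T.length + 2 ∧ 3 * per (sub T i (i + 3 * τ - 1)) ≤ τ}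

/-- `rend(j) = min{j′ ≥ j : j′ ∉ R} + 3τ − 2`. -/
noncomputable def rend (T : List ℕ) (τ j : ℕ) : ℕ :=
  sInf {j' | j ≤ j' ∧ j' ∉ R T τ} + 3 * τ - 2

/-- `L-root(j)`: lexicographically smallest among `{T[j+t..j+t+p) : 0 ≤ t < p}`
where `p = per(T[j..j+3τ−1))`. -/
noncomputable def Lroot (T : List ℕ) (τ j : ℕ) : List ℕ :=
  WithTop.untopD [] (((Finset.range (per (sub T j (j + 3 * τ - 1)))).image fun t =>
      sub T (j + t) (j + t + per (sub T j (j + 3 * τ - 1)))).min)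

/-- `L-head(j)`: the (unique) `s ∈ [0..p)` with `T[j+s..j+s+p) = L-root(j)`. -/
noncomputable def Lhead (T : List ℕ) (τ j : ℕ) : ℕ :=
  sInf {s | s < per (sub T j (j + 3 * τ - 1)) ∧
    sub T (j + s) (j + s + per (sub T j (j + 3 * τ - 1))) = Lroot T τ j}

noncomputable def Lexp (T : List ℕ) (τ j : ℕ) : ℕ :=
  (rend T τ j - j - Lhead T τ j) / per (sub T j (j + 3 * τ - 1))

noncomputable def Ltail (T : List ℕ) (τ j : ℕ) : ℕ :=
  (rend T τ j - j - Lhead T τ j) % per (sub T j (j + 3 * τ - 1))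

noncomputable def rendfull (T : List ℕ) (τ j : ℕ) : ℕ := rend T τ j - Ltail T τ j

/-- `type(j) = +1` if `rend(j) ≤ n` and `T[rend(j)] > T[rend(j)−p]`, and `−1` otherwise. -/
noncomputable def typ (T : List ℕ) (τ j : ℕ) : ℤ :=
  if rend T τ j ≤ T.length ∧
      idx T (rend T τ j - per (sub T j (j + 3 * τ - 1))) < idx T (rend T τ j)
    then 1 else -1

noncomputable def Rminus (T : List ℕ) (τ : ℕ) : Set ℕ := {j ∈ R T τ | typ T τ j = -1}

noncomputable def RH (T : List ℕ) (τ : ℕ) (H : List ℕ) : Set ℕ :=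
  {j ∈ R T τ | Lroot T τ j = H}

noncomputable def RsH (T : List ℕ) (τ s : ℕ) (H : List ℕ) : Set ℕ :=
  {j ∈ R T τ | Lroot T τ j = H ∧ Lhead T τ j = s}

noncomputable def RminusH (T : List ℕ) (τ : ℕ) (H : List ℕ) : Set ℕ :=
  Rminus T τ ∩ RH T τ H

noncomputable def RminusSH (T : List ℕ) (τ s : ℕ) (H : List ℕ) : Set ℕ :=
  Rminus T τ ∩ RsH T τ s H

noncomputable def Rprime (T : List ℕ) (τ : ℕ) : Set ℕ := {j ∈ R T τ | j - 1 ∉ R T τ}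

/-- `Occ(P,S)`: the set of (1-indexed) starting positions of occurrences of `P` in `S`. -/
def OccSet (P S : List ℕ) : Set ℕ :=
  {j | 1 ≤ j ∧ j + P.length ≤ S.length + 1 ∧ sub S j (j + P.length) = P}

noncomputable def RangeBeg (P T : List ℕ) : ℕ :=
  Set.ncard {i | 1 ≤ i ∧ i ≤ T.length ∧ suf T i < P}

noncomputable def RangeEnd (P T : List ℕ) : ℕ := RangeBeg P T + (OccSet P T).ncard

/-- `ISA[j]`: the lexicographic rank of the suffix `T[j..n]` among all suffixes of `T`. -/
noncomputable def ISA (T : List ℕ) (j : ℕ) : ℕ :=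
  Set.ncard {j' | 1 ≤ j' ∧ j' ≤ T.length ∧ suf T j' ≤ suf T j}

/-- `succ_S(i) = min{j ∈ S ∪ {n−2τ+2} : j ≥ i}`. -/
noncomputable def succS (T : List ℕ) (τ : ℕ) (Sync : Set ℕ) (i : ℕ) : ℕ :=
  sInf {j | i ≤ j ∧ (j ∈ Sync ∨ j = T.length + 2 - 2 * τ)}

/-- The set `D` of distinguishing prefixes. -/
noncomputable def Dset (T : List ℕ) (τ : ℕ) (Sync : Set ℕ) : Set (List ℕ) :=
  {X | ∃ i, 1 ≤ i ∧ i + 3 * τ ≤ T.length + 2 ∧ i ∉ R T τ ∧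
    X = sub T i (succS T τ Sync i + 2 * τ)}

/-- `T^∞[i] = T[1 + ((i−1) mod n)]` for `i : ℤ`. -/
def tinf (T : List ℕ) (i : ℤ) : ℕ := idx T (((i - 1).emod (T.length : ℤ)).toNat + 1)

/-- `W[i]`: the reverse of `T^∞[s^lex_i − τ .. s^lex_i + 2τ)`. -/
def Wstr (T : List ℕ) (τ : ℕ) (slex : ℕ → ℕ) (i : ℕ) : List ℕ :=
  ((List.range (3 * τ)).map fun k => tinf T ((slex i : ℤ) - (τ : ℤ) + (k : ℤ))).reverse

/- Pattern versions of the `L`-decomposition functions. -/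

noncomputable def perP (τ : ℕ) (P : List ℕ) : ℕ := per (P.take (3 * τ - 1))

/-- A pattern is periodic if `|P| ≥ 3τ−1` and `per(P[1..3τ−1]) ≤ τ/3`. -/
noncomputable def Periodic (τ : ℕ) (P : List ℕ) : Prop :=
  3 * τ - 1 ≤ P.length ∧ 3 * perP τ P ≤ τ

noncomputable def pend (τ : ℕ) (P : List ℕ) : ℕ :=
  1 + perP τ P + lcp P (P.drop (perP τ P))

noncomputable def LrootP (τ : ℕ) (P : List ℕ) : List ℕ :=
  WithTop.untopD [] (((Finset.range (perP τ P)).image fun t => (P.drop t).take (perP τ P)).min)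

noncomputable def LheadP (τ : ℕ) (P : List ℕ) : ℕ :=
  sInf {s | s < perP τ P ∧ (P.drop s).take (perP τ P) = LrootP τ P}

noncomputable def LexpP (τ : ℕ) (P : List ℕ) : ℕ :=
  (pend τ P - 1 - LheadP τ P) / perP τ P

noncomputable def LtailP (τ : ℕ) (P : List ℕ) : ℕ :=
  (pend τ P - 1 - LheadP τ P) % perP τ P

noncomputable def pendfullP (τ : ℕ) (P : List ℕ) : ℕ := pend τ P - LtailP τ P

noncomputable def typP (τ : ℕ) (P : List ℕ) : ℤ :=
  if pend τ P ≤ P.length ∧ idx P (pend τ P - perP τ P) < idx P (pend τ P)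
    then 1 else -1

/-- `pow(H)`: the prefix of length `|H|·⌈τ/|H|⌉` of `H^∞`. -/
def powS (τ : ℕ) (H : List ℕ) : List ℕ :=
  (List.replicate ((τ + H.length - 1) / H.length) H).flatten


section AuxLemmas

lemma lcp_nil_right (A : List ℕ) : lcp A [] = 0 := by cases A <;> rfl

lemma lcp_cons (a b : ℕ) (A B : List ℕ) :
    lcp (a::A) (b::B) = if a = b then lcp A B + 1 else 0 := by
  unfold lcp
  simp [List.takeWhile_cons]
  by_cases h : a = b <;> simp [h, Nat.add_comm]

lemma lcp_le_right : ∀ (A B : List ℕ), lcp A B ≤ B.length := by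
  intro A; induction A with
  | nil => intro B; simp [lcp]
  | cons a A ih => intro B; cases B with
    | nil => simp [lcp_nil_right]
    | cons b B => rw [lcp_cons]; split <;> simp [Nat.succ_le_succ (ih B)]

lemma lcp_getD : ∀ (A B : List ℕ) (i : ℕ), i < lcp A B → A.getD i 0 = B.getD i 0 := by
  intro A; induction A with
  | nil => intro B i h; simp [lcp] at h
  | cons a A ih => intro B i h; cases B with
    | nil => simp [lcp_nil_right] at h
    | cons b B =>
      rw [lcp_cons] at h
      split at h
      · cases i with
        | zero => simpa using ‹a = b›
        | succ i => simpa using ih B i (by omega)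
      · omega

lemma le_lcp : ∀ (A B : List ℕ) (k : ℕ), k ≤ A.length → k ≤ B.length →
    (∀ i, i < k → A.getD i 0 = B.getD i 0) → k ≤ lcp A B := by
  intro A; induction A with
  | nil => intro B k h _ _; simp at h; omega
  | cons a A ih => intro B k hA hB hagree; cases B with
    | nil => simp at hB; omega
    | cons b B =>
      rw [lcp_cons]
      cases k with
      | zero => omega
      | succ k =>
        have hab : a = b := by simpa using hagree 0 (by omega)
        rw [if_pos hab]
        have := ih B k (by simpa using hA) (by simpa using hB)
          (fun i hi => by simpa using hagree (i+1) (by omega))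
        omega

lemma isPeriod_length {S : List ℕ} (h : 1 ≤ S.length) : IsPeriod S S.length :=
  ⟨h, le_rfl, fun i hi => by omega⟩

lemma per_le {S : List ℕ} {p : ℕ} (h : IsPeriod S p) : per S ≤ p := Nat.sInf_le h

lemma per_isPeriod {S : List ℕ} (h : 1 ≤ S.length) : IsPeriod S (per S) :=
  Nat.sInf_mem (⟨S.length, isPeriod_length h⟩ : {p | IsPeriod S p}.Nonempty)

lemma getD_drop_take {S : List ℕ} {a b i : ℕ} (hi : i < b) :
    ((S.drop a).take b).getD i 0 = S.getD (a + i) 0 := by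
  rw [List.getD_eq_getElem?_getD, List.getD_eq_getElem?_getD,
    List.getElem?_take, if_pos hi, List.getElem?_drop]

lemma getD_take {S : List ℕ} {b i : ℕ} (hi : i < b) :
    (S.take b).getD i 0 = S.getD i 0 := by
  rw [List.getD_eq_getElem?_getD, List.getD_eq_getElem?_getD,
    List.getElem?_take, if_pos hi]

lemma getD_drop {S : List ℕ} {a i : ℕ} :
    (S.drop a).getD i 0 = S.getD (a + i) 0 := by
  rw [List.getD_eq_getElem?_getD, List.getD_eq_getElem?_getD, List.getElem?_drop]

lemma isPeriod_infix {S : List ℕ} {p a b : ℕ} (h : IsPeriod S p) (hb : p ≤ b)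
    (hab : a + b ≤ S.length) : IsPeriod ((S.drop a).take b) p := by
  obtain ⟨h1, h2, h3⟩ := h
  have hlen : ((S.drop a).take b).length = b := by
    simp [List.length_take, List.length_drop]; omega
  refine ⟨h1, by omega, fun i hi => ?_⟩
  rw [hlen] at hi
  rw [getD_drop_take (by omega), getD_drop_take (by omega)]
  have := h3 (a + i) (by omega)
  rw [this]; ring_nf

/-- The main content: every occurrence of a periodic pattern lies in `R_{s,H}`
and has `L-exp(j) ≥ L-exp(P)`. -/
lemma occ_key (τ : ℕ) (hτ : 1 ≤ τ) (T P : List ℕ) (hperiodic : Periodic τ P)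
    (j : ℕ) (hj : j ∈ OccSet P T) :
    j ∈ RsH T τ (LheadP τ P) (LrootP τ P) ∧ LexpP τ P ≤ Lexp T τ j := by
  obtain ⟨hj1, hj2, hj3⟩ := hj
  obtain ⟨hm3, hp3⟩ := hperiodic
  have hlt : (P.take (3*τ-1)).length = 3*τ-1 := by
    simp [List.length_take]; omega
  have hPtake : IsPeriod (P.take (3*τ-1)) (perP τ P) :=
    per_isPeriod (by rw [hlt]; omega)
  have hp1 : 1 ≤ perP τ P := hPtake.1
  have hple : perP τ P ≤ 3*τ-1 := by
    have h : perP τ P ≤ (P.take (3*τ-1)).length :=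
      per_le (isPeriod_length (by rw [hlt]; omega))
    rw [hlt] at h; exact h
  -- the suffix of T at j
  have hD : (T.drop (j-1)).take P.length = P := by
    have : sub T j (j + P.length) = (T.drop (j-1)).take P.length := by
      unfold sub; congr 1; omega
    rw [← this]; exact hj3
  have hsubk : ∀ a b : ℕ, a + b ≤ P.length →
      sub T (j+a) (j+a+b) = (P.drop a).take b := by
    intro a b hab
    have h1 : sub T (j+a) (j+a+b) = ((T.drop (j-1)).drop a).take b := by
      unfold sub
      rw [List.drop_drop, show j - 1 + a = j+a-1 by omega,
        show j+a+b-(j+a) = b by omega]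
    rw [h1, ← hD, List.drop_take, List.take_take,
      show min b (P.length - a) = b by omega]
  -- T[j..j+3τ-1) = P[1..3τ-1)
  have h1 : sub T j (j + 3*τ - 1) = P.take (3*τ-1) := by
    have := hsubk 0 (3*τ-1) (by omega)
    rw [show j + 3*τ - 1 = j + 0 + (3*τ-1) by omega]
    simpa using this
  have hper : per (sub T j (j + 3*τ - 1)) = perP τ P := by rw [h1]; rfl
  -- j ∈ R
  have hjR : j ∈ R T τ := by
    refine ⟨hj1, by omega, ?_⟩
    rw [hper]; exact hp3
  -- L-root and L-head agree
  have hsubt : ∀ t, t < perP τ P →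
      sub T (j+t) (j+t+perP τ P) = (P.drop t).take (perP τ P) := by
    intro t ht
    exact hsubk t (perP τ P) (by omega)
  have hLroot : Lroot T τ j = LrootP τ P := by
    unfold Lroot LrootP
    rw [hper]
    congr 2
    apply Finset.image_congr
    intro t ht
    exact hsubt t (by simpa using ht)
  have hLhead : Lhead T τ j = LheadP τ P := by
    unfold Lhead LheadP
    rw [hper, hLroot]
    congr 1
    ext t
    constructor
    · rintro ⟨ht, he⟩; exact ⟨ht, by rw [← hsubt t ht]; exact he⟩
    · rintro ⟨ht, he⟩; exact ⟨ht, by rw [hsubt t ht]; exact he⟩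
  -- bounds on pend
  have hlcp_le : lcp P (P.drop (perP τ P)) ≤ P.length - perP τ P := by
    have := lcp_le_right P (P.drop (perP τ P))
    simpa [List.length_drop] using this
  have hlcp_ge : 3*τ - 1 - perP τ P ≤ lcp P (P.drop (perP τ P)) := by
    apply le_lcp _ _ _ (by omega) (by simp [List.length_drop]; omega)
    intro i hi
    rw [getD_drop]
    have h2 := hPtake.2.2 i (by rw [hlt]; omega)
    rw [getD_take (by omega), getD_take (by omega)] at h2
    rw [h2]; congr 1; omega
  obtain ⟨k, hk⟩ : ∃ k, pend τ P - 1 = k := ⟨_, rfl⟩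
  have hkpl : k = perP τ P + lcp P (P.drop (perP τ P)) := by
    have h5 := hk; unfold pend at h5; omega
  have hpend_ge : 3*τ - 1 ≤ k := by omega
  have hpend_le : k ≤ P.length := by omega
  -- P.take k is p-periodic
  have hQper : IsPeriod (P.take k) (perP τ P) := by
    refine ⟨hp1, by simp [List.length_take]; omega, ?_⟩
    intro i hi
    rw [List.length_take] at hi
    have hik : i + perP τ P < k := by omega
    rw [getD_take (by omega), getD_take (by omega)]
    have h3 := lcp_getD P (P.drop (perP τ P)) i (by omega)
    rw [getD_drop] at h3
    rw [h3]; congr 1; omega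
  -- lower bound on rend
  have hrend : j + k ≤ rend T τ j := by
    have hbound : j + k + 2 - 3*τ ≤ sInf {j' | j ≤ j' ∧ j' ∉ R T τ} := by
      apply le_csInf
      · exact ⟨j + T.length + 1, by omega, fun hmem => by have := hmem.2.1; omega⟩
      · rintro j' ⟨hjj', hnotR⟩
        by_contra hlt2
        push_neg at hlt2
        apply hnotR
        have hA : 1 ≤ j' := by omega
        have hB : j' + 3*τ ≤ T.length + 2 := by omega
        refine ⟨hA, hB, ?_⟩
        have hsj' : sub T j' (j' + 3*τ - 1) =
            ((P.take k).drop (j'-j)).take (3*τ-1) := by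
          have h4 := hsubk (j'-j) (3*τ-1) (by omega)
          rw [show j + (j'-j) = j' by omega,
            show j' + (3*τ-1) = j' + 3*τ - 1 by omega] at h4
          rw [h4, List.drop_take, List.take_take,
            show min (3*τ-1) (k - (j'-j)) = 3*τ-1 by omega]
        rw [hsj']
        have hip := isPeriod_infix (a := j'-j) (b := 3*τ-1) hQper hple
          (by simp [List.length_take]; omega)
        have := per_le hip
        omega
    unfold rend
    omega
  -- conclude
  have hLexp : LexpP τ P ≤ Lexp T τ j := by
    unfold LexpP Lexp
    rw [hper, hLhead, hk]
    apply Nat.div_le_div_right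
    omega
  exact ⟨⟨hjR, hLroot, hLhead⟩, hLexp⟩

end AuxLemmas

/-- Lemma: `Occ(P,T)` is the disjoint union of `Occᵃ(P,T)` and
`Occˢ(P,T)`. -/
theorem statement_13
    (σ n τ : ℕ) (T : List ℕ)
    (hσ : 2 ≤ σ) (hn : 2 ≤ n) (hτ : 1 ≤ τ)
    (hlen : T.length = n) (halph : ∀ c ∈ T, c < σ)
    (hlast : idx T n = 0) (huniq : ∀ i, 1 ≤ i → i < n → idx T i ≠ 0)
    (P : List ℕ) (m : ℕ) (hm : P.length = m) (halphP : ∀ c ∈ P, c < σ)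
    (hperiodic : Periodic τ P)
    (s : ℕ) (hs : s = LheadP τ P) (H : List ℕ) (hH : H = LrootP τ P)
    (Occa Occs : Set ℕ)
    (hOcca : Occa = {j | j ∈ RsH T τ s H ∩ OccSet P T ∧ LexpP τ P < Lexp T τ j})
    (hOccs : Occs = {j | j ∈ RsH T τ s H ∩ OccSet P T ∧ Lexp T τ j = LexpP τ P}) :
    OccSet P T = Occa ∪ Occs ∧ Disjoint Occa Occs ∧
    ∀ j ∈ OccSet P T, j ∈ RsH T τ s H ∧ LexpP τ P ≤ Lexp T τ j := by
  have key : ∀ j ∈ OccSet P T, j ∈ RsH T τ s H ∧ LexpP τ P ≤ Lexp T τ j := by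
    intro j hj
    rw [hs, hH]
    exact occ_key τ hτ T P hperiodic j hj
  refine ⟨?_, ?_, key⟩
  · ext j
    constructor
    · intro hj
      obtain ⟨hmem, hle⟩ := key j hj
      rcases lt_or_eq_of_le hle with hlt | heq
      · left; rw [hOcca]; exact ⟨⟨hmem, hj⟩, hlt⟩
      · right; rw [hOccs]; exact ⟨⟨hmem, hj⟩, heq.symm⟩
    · intro hj
      rcases hj with hj | hj
      · rw [hOcca] at hj; exact hj.1.2
      · rw [hOccs] at hj; exact hj.1.2
  · rw [Set.disjoint_left]
    intro j hja hjs
    rw [hOcca] at hja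
    rw [hOccs] at hjs
    have := hja.2
    have := hjs.2
    omega
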